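/- arXiv:2603.27293 — 2 statements merged into one kernel-verified Lean document; each statement's English description precedes it below -/
import Mathlib

section
/- Let B_{jk} | λ_k have density (λ_k²/4)exp(−λ_k|B_{jk}|^{1/2}) and λ_k ~ Gamma(a + k^{c₁}, rate k^{−c₂}) for j = 1,…,p and k ∈ ℕ⁺, all independent given the λ's. If a ≥ 4 and c₁ + c₂ > 1/4, then for every j, the sum ∑_{k=1}^∞ B_{jk}² converges almost surely; hence the random infinite loading matrix B lies in Θ_B = { B : max_{1≤j≤p} ∑_{k=1}^∞ B_{jk}² < ∞ } with probability one. -/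
open MeasureTheory Real ProbabilityTheory

open Set


-- Step 1: integrability of x^2 exp(-b sqrt x) on Ioi 0
lemma aux_integrableOn {b : ℝ} (hb : 0 < b) :
    IntegrableOn (fun x : ℝ => x ^ 2 * Real.exp (-b * Real.sqrt x)) (Ioi 0) := by
  have h := (integrableOn_Ioi_comp_rpow_iff
      (fun x : ℝ => x ^ 2 * Real.exp (-b * Real.sqrt x)) (p := 2) two_ne_zero).mp ?_
  · exact h
  · have : IntegrableOn (fun x : ℝ => 2 * (x ^ (5:ℝ) * Real.exp (-b * x ^ (1:ℝ)))) (Ioi 0) := by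
      exact (integrableOn_rpow_mul_exp_neg_mul_rpow (by norm_num) zero_lt_one hb).const_mul 2
    refine this.congr_fun (fun x hx => ?_) measurableSet_Ioi
    have hx0 : (0:ℝ) < x := hx
    have hsq : Real.sqrt (x ^ (2:ℝ)) = x := by
      rw [show (2:ℝ) = ((2:ℕ):ℝ) by norm_num, rpow_natCast, Real.sqrt_sq hx0.le]
    simp only [smul_eq_mul, hsq]
    rw [show (x ^ (2:ℝ)) ^ 2 = x ^ (4:ℝ) by
      rw [show (2:ℝ) = ((2:ℕ):ℝ) by norm_num, rpow_natCast, ← pow_mul,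
        show ((4:ℝ)) = ((4:ℕ):ℝ) by norm_num, rpow_natCast]]
    rw [rpow_one, show (5:ℝ) = 1 + 4 by norm_num, rpow_add hx0, rpow_one]
    ring_nf
    simp [abs_of_pos, mul_comm, mul_assoc, mul_left_comm]

-- Step 2: value of the integral
lemma aux_integral_val {b : ℝ} (hb : 0 < b) :
    ∫ x in Ioi (0:ℝ), x ^ 2 * Real.exp (-b * Real.sqrt x) = 240 * b ^ (-6:ℝ) := by
  have h := integral_rpow_mul_exp_neg_mul_rpow (p := 1/2) (q := 2) (b := b)
    (by norm_num) (by norm_num) hb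
  have heq : ∀ x ∈ Ioi (0:ℝ), x ^ 2 * Real.exp (-b * Real.sqrt x)
      = x ^ (2:ℝ) * Real.exp (-b * x ^ (1/2:ℝ)) := by
    intro x hx
    rw [← Real.rpow_natCast x 2, Real.rpow_natCast, ← Real.sqrt_eq_rpow]
    norm_num
  rw [setIntegral_congr_fun measurableSet_Ioi heq, h]
  have hG : Real.Gamma ((2 + 1) / (1/2)) = 120 := by
    rw [show ((2:ℝ) + 1) / (1/2) = (5:ℕ) + 1 by norm_num, Real.Gamma_nat_eq_factorial]
    norm_num [Nat.factorial]
  rw [hG]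
  norm_num
  ring

-- Step 3: integrability on ℝ of the even extension
lemma aux_integrable {b : ℝ} (hb : 0 < b) :
    Integrable (fun x : ℝ => x ^ 2 * Real.exp (-b * Real.sqrt |x|)) := by
  have hf : IntegrableOn (fun x : ℝ => |x| ^ 2 * Real.exp (-b * Real.sqrt |x|)) (Ioi 0) := by
    refine (aux_integrableOn hb).congr_fun (fun x hx => ?_) measurableSet_Ioi
    rw [abs_of_pos (show (0:ℝ) < x from hx)]
  have int_Iic : IntegrableOn (fun x : ℝ => |x| ^ 2 * Real.exp (-b * Real.sqrt |x|)) (Iic 0) := by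
    rw [← Measure.map_neg_eq_self (volume : Measure ℝ)]
    have m : MeasurableEmbedding fun x : ℝ => -x := (Homeomorph.neg ℝ).measurableEmbedding
    rw [m.integrableOn_map_iff]
    simp_rw [Function.comp_def, abs_neg, neg_preimage, neg_Iic, neg_zero]
    exact Iff.mpr integrableOn_Ici_iff_integrableOn_Ioi hf
  have : Integrable (fun x : ℝ => |x| ^ 2 * Real.exp (-b * Real.sqrt |x|)) := by
    rw [← integrableOn_univ, ← Iic_union_Ioi (a := (0:ℝ)), integrableOn_union]
    exact ⟨int_Iic, hf⟩
  exact this.congr (Filter.Eventually.of_forall fun x => by simp [sq_abs])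

-- Step 4: value of the lintegral J over ℝ
lemma aux_J {b : ℝ} (hb : 0 < b) :
    ∫⁻ x : ℝ, ENNReal.ofReal (x ^ 2 * Real.exp (-b * Real.sqrt |x|))
      = ENNReal.ofReal (480 * b ^ (-6:ℝ)) := by
  rw [← ofReal_integral_eq_lintegral_ofReal (aux_integrable hb)
    (Filter.Eventually.of_forall fun x => by positivity)]
  congr 1
  have := integral_comp_abs (f := fun x : ℝ => x ^ 2 * Real.exp (-b * Real.sqrt x))
  simp_rw [sq_abs] at this
  rw [this, aux_integral_val hb]
  ring

-- Step 5: inner integral formula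
lemma aux_inner {α r : ℝ} (hα : 4 < α) (hr : 0 < r) {l : ℝ} (hl : l ≠ 0) :
    ∫⁻ y : ℝ, ENNReal.ofReal (gammaPDFReal α r l * (l ^ 2 / 4) * Real.exp (-l * Real.sqrt |y|))
        * ENNReal.ofReal (y ^ 2)
      = ENNReal.ofReal (120 * r ^ (4:ℝ) * (Real.Gamma (α - 4) / Real.Gamma α))
          * gammaPDF (α - 4) r l := by
  rcases lt_or_gt_of_ne hl with hneg | hpos
  · simp [gammaPDFReal, not_le.mpr hneg, gammaPDF_of_neg hneg]
  · have hga : 0 ≤ gammaPDFReal α r l * (l ^ 2 / 4) := by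
      have := gammaPDFReal_nonneg (show (0:ℝ) < α by linarith) hr l
      positivity
    have key : ∀ y : ℝ,
        ENNReal.ofReal (gammaPDFReal α r l * (l ^ 2 / 4) * Real.exp (-l * Real.sqrt |y|))
          * ENNReal.ofReal (y ^ 2)
        = ENNReal.ofReal (gammaPDFReal α r l * (l ^ 2 / 4))
          * ENNReal.ofReal (y ^ 2 * Real.exp (-l * Real.sqrt |y|)) := by
      intro y
      rw [ENNReal.ofReal_mul hga, mul_assoc, ← ENNReal.ofReal_mul (Real.exp_nonneg _)]
      congr 2
      ring
    have hmeas : Measurable fun y : ℝ => ENNReal.ofReal (y ^ 2 * Real.exp (-l * Real.sqrt |y|)) :=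
      Measurable.ennreal_ofReal <|
        (measurable_id.pow_const 2).mul ((measurable_id.abs.sqrt.const_mul (-l)).exp)
    rw [lintegral_congr key, lintegral_const_mul _ hmeas, aux_J hpos]
    have hΓ4 : (0:ℝ) < Real.Gamma (α - 4) := Real.Gamma_pos_of_pos (by linarith)
    have hΓ : (0:ℝ) < Real.Gamma α := Real.Gamma_pos_of_pos (by linarith)
    have hC : 0 ≤ 120 * r ^ (4:ℝ) * (Real.Gamma (α - 4) / Real.Gamma α) := by positivity
    rw [gammaPDF_of_nonneg (le_of_lt hpos), ← ENNReal.ofReal_mul hga, ← ENNReal.ofReal_mul hC]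
    congr 1
    rw [gammaPDFReal, if_pos hpos.le]
    have hrα : r ^ α = r ^ (4:ℝ) * r ^ (α - 4) := by
      rw [← Real.rpow_add hr]; ring_nf
    have hlpow : l ^ (α - 1) * l ^ 2 * l ^ (-6:ℝ) = l ^ (α - 4 - 1) := by
      rw [← Real.rpow_natCast l 2, ← Real.rpow_add hpos, ← Real.rpow_add hpos]
      congr 1
      push_cast
      ring
    rw [hrα, ← hlpow]
    field_simp
    ring

-- Step 6: the second moment
lemma aux_moment {Ω : Type*} [MeasurableSpace Ω] (μ : Measure Ω) {α r : ℝ}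
    (hα : 4 < α) (hr : 0 < r)
    (Lk Bk : Ω → ℝ) (hL : Measurable Lk) (hB : Measurable Bk)
    (hj : Measure.map (fun ω => (Lk ω, Bk ω)) μ =
      (volume : Measure (ℝ × ℝ)).withDensity fun q => ENNReal.ofReal
        (gammaPDFReal α r q.1 * (q.1 ^ 2 / 4) * Real.exp (-q.1 * Real.sqrt |q.2|))) :
    ∫⁻ ω, ENNReal.ofReal ((Bk ω) ^ 2) ∂μ
      = ENNReal.ofReal (120 * r ^ (4:ℝ) * (Real.Gamma (α - 4) / Real.Gamma α)) := by
  have hmg : Measurable (fun q : ℝ × ℝ => ENNReal.ofReal (q.2 ^ 2)) :=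
    Measurable.ennreal_ofReal (measurable_snd.pow_const 2)
  have hdens : Measurable (fun q : ℝ × ℝ => ENNReal.ofReal
      (gammaPDFReal α r q.1 * (q.1 ^ 2 / 4) * Real.exp (-q.1 * Real.sqrt |q.2|))) := by
    apply Measurable.ennreal_ofReal
    exact (((measurable_gammaPDFReal α r).comp measurable_fst).mul
      ((measurable_fst.pow_const 2).div_const 4)).mul
      ((measurable_fst.neg.mul measurable_snd.abs.sqrt).exp)
  have hpair : Measurable (fun ω => (Lk ω, Bk ω)) := hL.prodMk hB
  calc ∫⁻ ω, ENNReal.ofReal ((Bk ω) ^ 2) ∂μ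
      = ∫⁻ q, ENNReal.ofReal (q.2 ^ 2) ∂(Measure.map (fun ω => (Lk ω, Bk ω)) μ) :=
        (lintegral_map hmg hpair).symm
    _ = ∫⁻ q : ℝ × ℝ, (ENNReal.ofReal
          (gammaPDFReal α r q.1 * (q.1 ^ 2 / 4) * Real.exp (-q.1 * Real.sqrt |q.2|))
          * ENNReal.ofReal (q.2 ^ 2)) := by
        rw [hj, lintegral_withDensity_eq_lintegral_mul _ hdens hmg]; rfl
    _ = ∫⁻ l : ℝ, ∫⁻ y : ℝ, ENNReal.ofReal
          (gammaPDFReal α r l * (l ^ 2 / 4) * Real.exp (-l * Real.sqrt |y|))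
          * ENNReal.ofReal (y ^ 2) := by
        rw [MeasureTheory.Measure.volume_eq_prod]
        exact lintegral_prod _ ((hdens.mul hmg).aemeasurable)
    _ = ∫⁻ _ : ℝ, ENNReal.ofReal (120 * r ^ (4:ℝ) * (Real.Gamma (α - 4) / Real.Gamma α))
          * gammaPDF (α - 4) r _ := by
        refine lintegral_congr_ae ?_
        have hae : ∀ᵐ l : ℝ, l ≠ 0 := by
          rw [ae_iff]
          simp
        exact hae.mono fun l hl => aux_inner hα hr hl
    _ = ENNReal.ofReal (120 * r ^ (4:ℝ) * (Real.Gamma (α - 4) / Real.Gamma α)) := by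
        rw [lintegral_const_mul _ ((show Measurable (gammaPDF (α-4) r) from Measurable.ennreal_ofReal (measurable_gammaPDFReal _ _))),
          lintegral_gammaPDF_eq_one (by linarith) hr, mul_one]

/-- Under the L_{1/2} increasing shrinkage prior (column `k+1` has global parameter
`λ_k ~ Gamma(a + (k+1)^{c₁}, rate (k+1)^{−c₂})` and `B_{jk} | λ_k` has density
`(λ_k²/4)exp(−λ_k|B|^{1/2})`, independently across columns), if `a ≥ 4` and
`c₁ + c₂ > 1/4`, then almost surely `∑_k B_{jk}² < ∞` for every `j`; hence the random
infinite loading matrix lies in `Θ_B` with probability one. -/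
theorem loading_matrix_in_theta_B_almost_surely
    {Ω : Type*} [MeasurableSpace Ω] (μ : Measure Ω) [IsProbabilityMeasure μ]
    (p : ℕ) (a c₁ c₂ : ℝ) (ha : 4 ≤ a) (hc₁ : 0 < c₁) (hc₂ : 0 < c₂)
    (hc : 1 / 4 < c₁ + c₂)
    (L : ℕ → Ω → ℝ) (B : Fin p → ℕ → Ω → ℝ)
    (hmeasL : ∀ k, Measurable (L k)) (hmeasB : ∀ j k, Measurable (B j k))
    (hjoint : ∀ (j : Fin p) (k : ℕ),
      Measure.map (fun ω => (L k ω, B j k ω)) μ =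
        (volume : Measure (ℝ × ℝ)).withDensity fun q =>
          ENNReal.ofReal
            (gammaPDFReal (a + ((k : ℝ) + 1) ^ c₁) (((k : ℝ) + 1) ^ (-c₂)) q.1 *
              (q.1 ^ 2 / 4) * Real.exp (-q.1 * Real.sqrt |q.2|)))
    (hindep : iIndepFun
      (fun k ω => (L k ω, fun j : Fin p => B j k ω)) μ) :
    ∀ᵐ ω ∂μ, ∀ j : Fin p, Summable fun k : ℕ => (B j k ω) ^ 2 := by
  rw [ae_all_iff]
  intro j
  set s : ℝ := 4 * (c₁ + c₂) with hs_def
  have hs : 1 < s := by rw [hs_def]; linarith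
  -- per-k moment bound
  have hmom : ∀ k : ℕ, ∫⁻ ω, ENNReal.ofReal ((B j k ω) ^ 2) ∂μ
      ≤ ENNReal.ofReal (120 * ((k:ℝ) + 1) ^ (-s)) := by
    intro k
    set u : ℝ := (k:ℝ) + 1 with hu_def
    have hu1 : (1:ℝ) ≤ u := by simp [hu_def]
    have hu0 : (0:ℝ) < u := by linarith
    set t : ℝ := u ^ c₁ with ht_def
    have ht1 : (1:ℝ) ≤ t := Real.one_le_rpow hu1 hc₁.le
    set α : ℝ := a + t with hα_def
    have hα : 4 < α := by rw [hα_def]; linarith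
    set r : ℝ := u ^ (-c₂) with hr_def
    have hr : 0 < r := Real.rpow_pos_of_pos hu0 _
    rw [aux_moment μ hα hr (L k) (B j k) (hmeasL k) (hmeasB j k) (hjoint j k)]
    apply ENNReal.ofReal_le_ofReal
    -- Gamma ratio bound
    have h4 : (0:ℝ) < α - 4 := by linarith
    have hΓ4 : (0:ℝ) < Real.Gamma (α - 4) := Real.Gamma_pos_of_pos h4
    have G1 : Real.Gamma (α - 3) = (α - 4) * Real.Gamma (α - 4) := by
      rw [show α - 3 = (α - 4) + 1 by ring, Real.Gamma_add_one h4.ne']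
    have G2 : Real.Gamma (α - 2) = (α - 3) * Real.Gamma (α - 3) := by
      rw [show α - 2 = (α - 3) + 1 by ring, Real.Gamma_add_one (by linarith)]
    have G3 : Real.Gamma (α - 1) = (α - 2) * Real.Gamma (α - 2) := by
      rw [show α - 1 = (α - 2) + 1 by ring, Real.Gamma_add_one (by linarith)]
    have G4 : Real.Gamma α = (α - 1) * Real.Gamma (α - 1) := by
      rw [show α = (α - 1) + 1 by ring, Real.Gamma_add_one (by linarith)]
      norm_num
    have hprod : t ^ (4:ℕ) ≤ (α - 1) * ((α - 2) * ((α - 3) * (α - 4))) := by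
      have ht0 : (0:ℝ) < t := by linarith
      have h1 : t ≤ α - 4 := by rw [hα_def]; linarith
      have h2 : t ≤ α - 3 := by linarith
      have h3 : t ≤ α - 2 := by linarith
      have h4' : t ≤ α - 1 := by linarith
      have hA : t * t ≤ (α - 3) * (α - 4) := mul_le_mul h2 h1 ht0.le (by linarith)
      have hB : t * (t * t) ≤ (α - 2) * ((α - 3) * (α - 4)) :=
        mul_le_mul h3 hA (by positivity) (by linarith)
      have hC : t * (t * (t * t)) ≤ (α - 1) * ((α - 2) * ((α - 3) * (α - 4))) :=
        mul_le_mul h4' hB (by positivity) (by linarith)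
      calc t ^ (4:ℕ) = t * (t * (t * t)) := by ring
        _ ≤ _ := hC
    have hratio : Real.Gamma (α - 4) / Real.Gamma α ≤ (t ^ (4:ℕ))⁻¹ := by
      rw [G4, G3, G2, G1]
      rw [div_eq_mul_inv]
      have hden : (0:ℝ) < (α - 1) * ((α - 2) * ((α - 3) * ((α - 4) * Real.Gamma (α - 4)))) := by
        have p1 : (0:ℝ) < α - 1 := by linarith
        have p2 : (0:ℝ) < α - 2 := by linarith
        have p3 : (0:ℝ) < α - 3 := by linarith
        exact mul_pos p1 (mul_pos p2 (mul_pos p3 (mul_pos h4 hΓ4)))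
      rw [show (α - 1) * ((α - 2) * ((α - 3) * ((α - 4) * Real.Gamma (α - 4))))
          = ((α - 1) * ((α - 2) * ((α - 3) * (α - 4)))) * Real.Gamma (α - 4) by ring]
      rw [mul_inv, ← mul_assoc]
      rw [mul_comm (Real.Gamma (α-4))]
      rw [mul_assoc, mul_inv_cancel₀ hΓ4.ne', mul_one]
      exact inv_anti₀ (by positivity) hprod
    -- assemble
    have hr4 : r ^ (4:ℝ) = u ^ (-c₂ * 4) := by
      rw [hr_def, ← Real.rpow_mul hu0.le]
    have ht4 : (t ^ (4:ℕ))⁻¹ = u ^ (-(c₁ * 4)) := by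
      rw [ht_def, ← Real.rpow_natCast (u ^ c₁) 4, ← Real.rpow_mul hu0.le,
        ← Real.rpow_neg hu0.le]
      norm_num
    calc 120 * r ^ (4:ℝ) * (Real.Gamma (α - 4) / Real.Gamma α)
        ≤ 120 * r ^ (4:ℝ) * (t ^ (4:ℕ))⁻¹ := by
          have h0 : (0:ℝ) ≤ 120 * r ^ (4:ℝ) := by positivity
          exact mul_le_mul_of_nonneg_left hratio h0
      _ = 120 * u ^ (-s) := by
          rw [hr4, ht4, mul_assoc, ← Real.rpow_add hu0, hs_def]
          ring_nf
  -- summability of the bound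
  have hsum : Summable fun k : ℕ => 120 * ((k:ℝ) + 1) ^ (-s) := by
    apply Summable.mul_left
    have h := Real.summable_nat_rpow.mpr (show -s < -1 by linarith)
    have := (summable_nat_add_iff 1).mpr h
    refine this.congr fun k => ?_
    push_cast
    ring_nf
  -- total expectation finite
  have hmeas2 : ∀ k : ℕ, Measurable fun ω => ENNReal.ofReal ((B j k ω) ^ 2) :=
    fun k => Measurable.ennreal_ofReal ((hmeasB j k).pow_const 2)
  have htot : ∫⁻ ω, ∑' k, ENNReal.ofReal ((B j k ω) ^ 2) ∂μ < ⊤ := by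
    rw [lintegral_tsum fun k => (hmeas2 k).aemeasurable]
    calc ∑' k, ∫⁻ ω, ENNReal.ofReal ((B j k ω) ^ 2) ∂μ
        ≤ ∑' k : ℕ, ENNReal.ofReal (120 * ((k:ℝ) + 1) ^ (-s)) := ENNReal.tsum_le_tsum hmom
      _ = ENNReal.ofReal (∑' k : ℕ, 120 * ((k:ℝ) + 1) ^ (-s)) :=
          (ENNReal.ofReal_tsum_of_nonneg (fun k => by positivity) hsum).symm
      _ < ⊤ := ENNReal.ofReal_lt_top
  have hae : ∀ᵐ ω ∂μ, ∑' k, ENNReal.ofReal ((B j k ω) ^ 2) < ⊤ :=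
    ae_lt_top (Measurable.ennreal_tsum hmeas2) htot.ne
  refine hae.mono fun ω hω => ?_
  have := ENNReal.summable_toReal hω.ne
  refine this.congr fun k => ?_
  rw [ENNReal.toReal_ofReal (sq_nonneg _)]
end

section
/- If B | τ², λ ~ N(0, τ²/λ⁴), τ² | v ~ Exponential(rate 1/(2v²)), and v ~ Gamma(3/2, rate 1/4), then the marginal density of B given λ is (λ²/4)·exp(−λ|B|^{1/2}). -/
open MeasureTheory Real

lemma glasser {c d : ℝ} (hc : 0 < c) (hd0 : 0 ≤ d) :
    ∫ s in Set.Ioi (0:ℝ), Real.exp (-(c*s - d/s)^2) = Real.sqrt π / (2*c) := by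
  rcases eq_or_lt_of_le hd0 with h0 | hd
  · have : ∀ s : ℝ, Real.exp (-(c*s - d/s)^2) = Real.exp (-(c^2) * s^2) := by
      intro s; rw [← h0]; ring_nf
    simp_rw [this, integral_gaussian_Ioi, Real.sqrt_div Real.pi_pos.le,
      Real.sqrt_sq hc.le]
    ring
  · -- derivative of w s = c s - d/s
    have hw : ∀ x ∈ Set.Ioi (0:ℝ),
        HasDerivWithinAt (fun s : ℝ => c*s - d/s) (c + d/x^2) (Set.Ioi 0) x := by
      intro x hx
      have hx0 : x ≠ 0 := ne_of_gt hx
      have h : HasDerivAt (fun y : ℝ => c * y - d * y⁻¹) (c * 1 - d * -(x^2)⁻¹) x :=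
        ((hasDerivAt_id x).const_mul c).sub ((hasDerivAt_inv hx0).const_mul d)
      exact (by simpa only [div_eq_mul_inv, mul_one, mul_neg, sub_neg_eq_add] using h :
        HasDerivAt (fun s : ℝ => c*s - d/s) (c + d/x^2) x).hasDerivWithinAt
    have hinj : Set.InjOn (fun s : ℝ => c*s - d/s) (Set.Ioi (0:ℝ)) := by
      apply StrictMonoOn.injOn
      intro x hx y hy hxy
      simp only
      have hx0 : (0:ℝ) < x := hx
      have hy0 : (0:ℝ) < y := hy
      have h1 : d/y < d/x := div_lt_div_of_pos_left hd hx0 hxy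
      have h2 : c*x < c*y := by nlinarith
      linarith
    have himg : (fun s : ℝ => c*s - d/s) '' Set.Ioi (0:ℝ) = Set.univ := by
      apply Set.eq_univ_of_forall
      intro u
      have hr2 : (Real.sqrt (u^2 + 4*(c*d)))^2 = u^2 + 4*(c*d) :=
        Real.sq_sqrt (by positivity)
      set r : ℝ := Real.sqrt (u^2 + 4*(c*d)) with hr_def
      have hrpos : -u < r := by
        have hrnn : 0 ≤ r := Real.sqrt_nonneg _
        nlinarith [mul_pos hc hd]
      have hs : (0:ℝ) < (u + r)/(2*c) := div_pos (by linarith) (by linarith)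
      refine ⟨(u+r)/(2*c), hs, ?_⟩
      have h1 : u + r ≠ 0 := by linarith
      simp only
      rw [eq_comm, ← sub_eq_zero]
      field_simp
      ring_nf
      nlinarith [hr2]
    -- integrability of the main integrand
    have hcont : ContinuousOn (fun s : ℝ => Real.exp (-(c*s - d/s)^2)) (Set.Ioi 0) := by
      apply ContinuousOn.rexp
      apply ContinuousOn.neg
      apply ContinuousOn.pow
      exact ContinuousOn.sub (continuousOn_const.mul continuousOn_id)
        (continuousOn_const.div continuousOn_id (fun x hx => ne_of_gt hx))
    have hbound : ∀ s ∈ Set.Ioi (0:ℝ),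
        Real.exp (-(c*s - d/s)^2) ≤ Real.exp (2*(c*d)) * Real.exp (-(c^2) * s^2) := by
      intro s hs
      rw [← Real.exp_add]
      apply Real.exp_le_exp.mpr
      have hs0 : s ≠ 0 := ne_of_gt hs
      have hexp : (c*s - d/s)^2 = c^2*s^2 - 2*(c*d) + (d/s)^2 := by
        field_simp; ring
      nlinarith [sq_nonneg (d/s)]
    have hJint : IntegrableOn (fun s : ℝ => Real.exp (-(c*s - d/s)^2)) (Set.Ioi 0) := by
      apply Integrable.mono'
        (((integrable_exp_neg_mul_sq (show (0:ℝ) < c^2 by positivity)).const_mul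
          (Real.exp (2*(c*d)))).integrableOn)
        (hcont.aestronglyMeasurable measurableSet_Ioi)
      filter_upwards [ae_restrict_mem measurableSet_Ioi] with s hs
      rw [Real.norm_eq_abs, abs_of_pos (Real.exp_pos _)]
      exact hbound s hs
    -- step B : gaussian over ℝ via substitution w
    have hB := integral_image_eq_integral_abs_deriv_smul measurableSet_Ioi hw hinj
      (fun x : ℝ => Real.exp (-x^2))
    rw [himg, Measure.restrict_univ] at hB
    have hgauss : ∫ x : ℝ, Real.exp (-x^2) = Real.sqrt π := by
      have h := integral_gaussian (1:ℝ)
      simp only [neg_mul, one_mul, div_one] at h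
      exact h
    rw [hgauss] at hB
    -- step C : the reflection substitution
    have hφ : ∀ x ∈ Set.Ioi (0:ℝ),
        HasDerivWithinAt (fun s : ℝ => d/(c*s)) ((d/c) * -(x^2)⁻¹) (Set.Ioi 0) x := by
      intro x hx
      have hx0 : x ≠ 0 := ne_of_gt hx
      have h : HasDerivAt (fun y : ℝ => (d/c) * y⁻¹) ((d/c) * -(x^2)⁻¹) x :=
        (hasDerivAt_inv hx0).const_mul (d/c)
      exact (by simpa only [div_eq_mul_inv, mul_inv, ← mul_assoc] using h :
        HasDerivAt (fun s : ℝ => d/(c*s)) ((d/c) * -(x^2)⁻¹) x).hasDerivWithinAt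
    have hφinj : Set.InjOn (fun s : ℝ => d/(c*s)) (Set.Ioi (0:ℝ)) := by
      intro x hx y hy h
      simp only at h
      have hx0 : (0:ℝ) < x := hx
      have hy0 : (0:ℝ) < y := hy
      rw [div_eq_div_iff (by positivity) (by positivity)] at h
      have h1 : c * y = c * x := mul_left_cancel₀ (ne_of_gt hd) h
      have h2 : y = x := mul_left_cancel₀ (ne_of_gt hc) h1
      exact h2.symm
    have hφimg : (fun s : ℝ => d/(c*s)) '' Set.Ioi (0:ℝ) = Set.Ioi (0:ℝ) := by
      ext u
      constructor
      · rintro ⟨s, hs, rfl⟩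
        have hs0 : (0:ℝ) < s := hs
        exact Set.mem_Ioi.mpr (by positivity)
      · intro hu
        have hu0 : (0:ℝ) < u := hu
        refine ⟨d/(c*u), Set.mem_Ioi.mpr (by positivity), ?_⟩
        simp only
        field_simp
    have heq : Set.EqOn
        (fun s : ℝ => |(d/c) * -(s^2)⁻¹| • Real.exp (-(c*(d/(c*s)) - d/(d/(c*s)))^2))
        (fun s : ℝ => 1/c * (d/s^2 * Real.exp (-(c*s - d/s)^2))) (Set.Ioi 0) := by
      intro s hs
      have hs0 : (0:ℝ) < s := hs
      have e1 : c*(d/(c*s)) = d/s := by field_simp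
      have e2 : d/(d/(c*s)) = c*s := by
        rw [div_div_eq_mul_div, mul_comm, mul_div_assoc, div_self (ne_of_gt hd), mul_one]
      have e3 : (-(d/s - c*s)^2 : ℝ) = -(c*s - d/s)^2 := by ring
      simp only [smul_eq_mul, e1, e2, e3]
      have habs : |(d/c) * -(s^2)⁻¹| = 1/c * (d/s^2) := by
        rw [abs_of_nonpos (mul_nonpos_of_nonneg_of_nonpos (by positivity)
          (neg_nonpos.mpr (by positivity)))]
        field_simp
      rw [habs]
      ring
    have hC := integral_image_eq_integral_abs_deriv_smul measurableSet_Ioi hφ hφinj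
      (fun t : ℝ => Real.exp (-(c*t - d/t)^2))
    rw [hφimg, setIntegral_congr_fun measurableSet_Ioi heq, integral_const_mul] at hC
    have himg' : IntegrableOn (fun t : ℝ => Real.exp (-(c*t - d/t)^2))
        ((fun s : ℝ => d/(c*s)) '' Set.Ioi 0) := by
      rw [hφimg]; exact hJint
    have h2' := (integrableOn_image_iff_integrableOn_abs_deriv_smul measurableSet_Ioi hφ hφinj
      (fun t : ℝ => Real.exp (-(c*t - d/t)^2))).mp himg'

    have hI2int : IntegrableOn (fun s : ℝ => d/s^2 * Real.exp (-(c*s - d/s)^2))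
        (Set.Ioi 0) := by
      have h3 := ((h2'.congr_fun heq measurableSet_Ioi).const_mul c)
      refine IntegrableOn.congr_fun h3 (fun s hs => ?_) measurableSet_Ioi
      field_simp
    have hBeq : Set.EqOn (fun s : ℝ => |c + d/s^2| • Real.exp (-(c*s - d/s)^2))
        (fun s : ℝ => c * Real.exp (-(c*s - d/s)^2)
          + d/s^2 * Real.exp (-(c*s - d/s)^2)) (Set.Ioi 0) := by
      intro s hs
      have hs0 : (0:ℝ) < s := hs
      simp only [smul_eq_mul]
      rw [abs_of_pos (by positivity)]
      ring
    rw [setIntegral_congr_fun measurableSet_Ioi hBeq,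
      integral_add (hJint.const_mul c) hI2int, integral_const_mul] at hB
    have hX : (∫ s in Set.Ioi (0:ℝ), d/s^2 * Real.exp (-(c*s - d/s)^2))
        = c * ∫ s in Set.Ioi (0:ℝ), Real.exp (-(c*s - d/s)^2) := by
      rw [hC, ← mul_assoc, mul_one_div_cancel (ne_of_gt hc), one_mul]
    rw [hX] at hB
    rw [eq_div_iff (by positivity)]
    linarith

lemma key_laplace {a b : ℝ} (ha : 0 ≤ a) (hb : 0 < b) :
    ∫ t in Set.Ioi (0:ℝ), Real.exp (-(a/t + b*t)) / Real.sqrt t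
      = Real.sqrt (π/b) * Real.exp (-2 * Real.sqrt (a*b)) := by
  set g : ℝ → ℝ := fun t => Real.exp (-(a/t + b*t)) / Real.sqrt t with hg_def
  -- substitution t = s^2
  have hsq : ∀ x ∈ Set.Ioi (0:ℝ),
      HasDerivWithinAt (fun s : ℝ => s^2) (2*x) (Set.Ioi x) x := by
    intro x hx
    simpa using (hasDerivAt_pow 2 x).hasDerivWithinAt
  have hsq' : ∀ x ∈ Set.Ioi (0:ℝ),
      HasDerivWithinAt (fun s : ℝ => s^2) (2*x) (Set.Ioi 0) x := by
    intro x hx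
    simpa using (hasDerivAt_pow 2 x).hasDerivWithinAt
  have hsqinj : Set.InjOn (fun s : ℝ => s^2) (Set.Ioi (0:ℝ)) := by
    intro x hx y hy h
    have hx0 : (0:ℝ) < x := hx
    have hy0 : (0:ℝ) < y := hy
    simp only at h
    have h2 : (x - y) * (x + y) = 0 := by linear_combination h
    rcases mul_eq_zero.mp h2 with h3 | h3
    · linarith
    · linarith
  have hsqimg : (fun s : ℝ => s^2) '' Set.Ioi (0:ℝ) = Set.Ioi (0:ℝ) := by
    ext u
    constructor
    · rintro ⟨s, hs, rfl⟩
      have : (0:ℝ) < s := hs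
      exact Set.mem_Ioi.mpr (by positivity)
    · intro hu
      have hu0 : (0:ℝ) < u := hu
      exact ⟨Real.sqrt u, Set.mem_Ioi.mpr (Real.sqrt_pos.mpr hu0), Real.sq_sqrt hu0.le⟩
  -- the transformed integrand and its integrability
  have heqn : Set.EqOn (fun s : ℝ => |2*s| • g (s^2))
      (fun s : ℝ => 2 * Real.exp (-(a/s^2 + b*s^2))) (Set.Ioi 0) := by
    intro s hs
    have hs0 : (0:ℝ) < s := hs
    simp only [smul_eq_mul, hg_def, Real.sqrt_sq hs0.le, abs_of_pos (by positivity : (0:ℝ) < 2*s)]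
    field_simp
  have hint2 : IntegrableOn (fun s : ℝ => 2 * Real.exp (-(a/s^2 + b*s^2)))
      (Set.Ioi 0) := by
    have hcont : ContinuousOn (fun s : ℝ => 2 * Real.exp (-(a/s^2 + b*s^2)))
        (Set.Ioi 0) := by
      apply ContinuousOn.mul continuousOn_const
      apply ContinuousOn.rexp
      apply ContinuousOn.neg
      exact ContinuousOn.add
        (continuousOn_const.div (continuousOn_pow 2)
          (fun x hx => by have hx0 : (0:ℝ) < x := hx; positivity))
        (continuousOn_const.mul (continuousOn_pow 2))
    apply Integrable.mono'
      (((integrable_exp_neg_mul_sq hb).const_mul 2).integrableOn)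
      (hcont.aestronglyMeasurable measurableSet_Ioi)
    filter_upwards [ae_restrict_mem measurableSet_Ioi] with s hs
    have hs0 : (0:ℝ) < s := hs
    rw [Real.norm_eq_abs, abs_of_pos (by positivity)]
    have h1 : -(a/s^2 + b*s^2) ≤ -b * s^2 := by
      have : 0 ≤ a/s^2 := by positivity
      nlinarith
    exact mul_le_mul_of_nonneg_left (Real.exp_le_exp.mpr h1) (by norm_num)
  have hgint : IntegrableOn g (Set.Ioi (0:ℝ)) := by
    have := (integrableOn_image_iff_integrableOn_abs_deriv_smul measurableSet_Ioi
      hsq' hsqinj g).mpr (hint2.congr_fun heqn.symm measurableSet_Ioi)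
    rwa [hsqimg] at this
  -- apply change of variables for Ioi
  have hmain : ∫ s in Set.Ioi (0:ℝ), (2*s) • (g ∘ (fun s : ℝ => s^2)) s
      = ∫ u in Set.Ioi ((0:ℝ)^2), g u := by
    apply integral_comp_smul_deriv_Ioi
    · exact (continuous_pow 2).continuousOn
    · exact Filter.tendsto_pow_atTop (by norm_num)
    · exact hsq
    · rw [hsqimg]
      apply ContinuousOn.div
      · apply ContinuousOn.rexp
        apply ContinuousOn.neg
        exact ContinuousOn.add
          (continuousOn_const.div continuousOn_id (fun x hx => ne_of_gt hx))
          (continuousOn_const.mul continuousOn_id)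
      · exact Real.continuous_sqrt.continuousOn
      · intro x hx
        exact ne_of_gt (Real.sqrt_pos.mpr hx)
    · have himg2 : (fun s : ℝ => s^2) '' Set.Ici (0:ℝ) ⊆ Set.Ici (0:ℝ) := by
        rintro u ⟨s, hs, rfl⟩
        exact Set.mem_Ici.mpr (by positivity)
      apply IntegrableOn.mono_set _ himg2
      rwa [integrableOn_Ici_iff_integrableOn_Ioi]
    · rw [integrableOn_Ici_iff_integrableOn_Ioi]
      apply hint2.congr_fun _ measurableSet_Ioi
      intro s hs
      have hs0 : (0:ℝ) < s := hs
      simp only [Function.comp, hg_def, smul_eq_mul, Real.sqrt_sq hs0.le]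
      field_simp
  rw [show ((0:ℝ)^2) = 0 from by norm_num] at hmain
  rw [← hmain]
  have hsb : (0:ℝ) < Real.sqrt b := Real.sqrt_pos.mpr hb
  have hexp_eq : ∀ s : ℝ, 0 < s → -(a/s^2 + b*s^2)
      = -2*Real.sqrt (a*b) + -(Real.sqrt b*s - Real.sqrt a/s)^2 := by
    intro s hs
    have hs0 : s ≠ 0 := ne_of_gt hs
    have h1 : Real.sqrt b^2 = b := Real.sq_sqrt hb.le
    have h2 : Real.sqrt a^2 = a := Real.sq_sqrt ha
    have h3 : Real.sqrt a * Real.sqrt b = Real.sqrt (a*b) := (Real.sqrt_mul ha b).symm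
    field_simp
    ring_nf
    linear_combination (s^4 : ℝ) * h1 + h2 - 2 * s^2 * h3
  have heqn2 : Set.EqOn (fun s : ℝ => (2*s) • (g ∘ (fun s : ℝ => s^2)) s)
      (fun s : ℝ => (2 * Real.exp (-2*Real.sqrt (a*b)))
        * Real.exp (-(Real.sqrt b*s - Real.sqrt a/s)^2)) (Set.Ioi 0) := by
    intro s hs
    have hs0 : (0:ℝ) < s := hs
    simp only [Function.comp, smul_eq_mul, hg_def, Real.sqrt_sq hs0.le]
    rw [hexp_eq s hs0, Real.exp_add]
    field_simp
  rw [setIntegral_congr_fun measurableSet_Ioi heqn2, integral_const_mul,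
    glasser hsb (Real.sqrt_nonneg a), Real.sqrt_div Real.pi_pos.le]
  field_simp

lemma const_eval : ((1/4:ℝ) ^ ((3:ℝ)/2) / Real.Gamma (3/2)) = 1/(4*Real.sqrt π) := by
  have h1 : ((1/4:ℝ)) = ((1/2:ℝ))^(2:ℕ) := by norm_num
  have h2 : ((1/4:ℝ)) ^ ((3:ℝ)/2) = 1/8 := by
    rw [h1, ← Real.rpow_natCast ((1/2:ℝ)) 2, ← Real.rpow_mul (by norm_num)]
    norm_num
  have h3 : Real.Gamma (3/2) = Real.sqrt π / 2 := by
    rw [show (3/2:ℝ) = 1/2 + 1 by norm_num, Real.Gamma_add_one (by norm_num),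
      Real.Gamma_one_half_eq]
    ring
  rw [h2, h3]
  have : Real.sqrt π ≠ 0 := ne_of_gt (Real.sqrt_pos.mpr Real.pi_pos)
  field_simp
  ring

/-- Gaussian scale-mixture representation of the L_{1/2} prior:
if `B | τ², λ ~ N(0, τ²/λ⁴)`, `τ² | v ~ Exp(rate 1/(2v²))` and `v ~ Gamma(3/2, rate 1/4)`,
then the marginal density of `B` given `λ` is `(λ²/4)·exp(−λ|B|^{1/2})`. -/
theorem l_half_scale_mixture (l : ℝ) (hl : 0 < l) (B : ℝ) :
    ∫ v in Set.Ioi (0 : ℝ), ∫ t in Set.Ioi (0 : ℝ),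
        (Real.sqrt (2 * Real.pi * (t / l ^ 4)))⁻¹ * Real.exp (-B ^ 2 / (2 * (t / l ^ 4)))
          * ((1 / (2 * v ^ 2)) * Real.exp (-(1 / (2 * v ^ 2)) * t))
          * ((1 / 4 : ℝ) ^ ((3 : ℝ) / 2) / Real.Gamma (3 / 2)
              * Real.sqrt v * Real.exp (-(v / 4)))
      = (l ^ 2 / 4) * Real.exp (-l * Real.sqrt |B|) := by
  set C : ℝ := (1/4:ℝ) ^ ((3:ℝ)/2) / Real.Gamma (3/2) with hC_def
  have hsπ : (0:ℝ) < Real.sqrt (2*π) := Real.sqrt_pos.mpr (by positivity)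
  have hinner : Set.EqOn
      (fun v : ℝ => ∫ t in Set.Ioi (0 : ℝ),
        (Real.sqrt (2 * Real.pi * (t / l ^ 4)))⁻¹ * Real.exp (-B ^ 2 / (2 * (t / l ^ 4)))
          * ((1 / (2 * v ^ 2)) * Real.exp (-(1 / (2 * v ^ 2)) * t))
          * (C * Real.sqrt v * Real.exp (-(v / 4))))
      (fun v : ℝ => (C * l^2/2)
        * (Real.exp (-((|B| * l^2)/v + v/4)) / Real.sqrt v)) (Set.Ioi 0) := by
    intro v hv
    have hv0 : (0:ℝ) < v := hv
    simp only
    have heqt : Set.EqOn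
        (fun t : ℝ =>
          (Real.sqrt (2 * Real.pi * (t / l ^ 4)))⁻¹ * Real.exp (-B ^ 2 / (2 * (t / l ^ 4)))
            * ((1 / (2 * v ^ 2)) * Real.exp (-(1 / (2 * v ^ 2)) * t))
            * (C * Real.sqrt v * Real.exp (-(v / 4))))
        (fun t : ℝ => (C * Real.sqrt v * Real.exp (-(v / 4)) * (1/(2*v^2))
            * (l^2 / Real.sqrt (2*π)))
          * (Real.exp (-((B^2*l^4/2)/t + (1/(2*v^2))*t)) / Real.sqrt t)) (Set.Ioi 0) := by
      intro t ht
      have ht0 : (0:ℝ) < t := ht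
      have h1 : Real.sqrt (2 * Real.pi * (t / l ^ 4))
          = Real.sqrt (2*π) * Real.sqrt t / l^2 := by
        rw [Real.sqrt_mul (by positivity), Real.sqrt_div (by positivity : (0:ℝ) ≤ t),
          show (l^4 : ℝ) = (l^2)^2 by ring, Real.sqrt_sq (by positivity), mul_div_assoc]
      have h2 : -B ^ 2 / (2 * (t / l ^ 4)) = -((B^2*l^4/2)/t) := by
        field_simp
      have h3 : (-(1 / (2 * v ^ 2)) * t : ℝ) = -((1/(2*v^2))*t) := by ring
      have h4 : Real.exp (-((B^2*l^4/2)/t + (1/(2*v^2))*t))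
          = Real.exp (-((B^2*l^4/2)/t)) * Real.exp (-((1/(2*v^2))*t)) := by
        rw [← Real.exp_add]; ring_nf
      simp only [h1, h2, h3, h4]
      have hst : Real.sqrt t ≠ 0 := ne_of_gt (Real.sqrt_pos.mpr ht0)
      field_simp
    rw [setIntegral_congr_fun measurableSet_Ioi heqt, integral_const_mul,
      key_laplace (by positivity : (0:ℝ) ≤ B^2*l^4/2) (by positivity : (0:ℝ) < 1/(2*v^2))]
    -- now pure algebra in v
    have h4 : Real.sqrt (π/(1/(2*v^2))) = v * Real.sqrt (2*π) := by
      rw [show π/(1/(2*v^2)) = (v * Real.sqrt (2*π))^2 by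
        rw [mul_pow, Real.sq_sqrt (by positivity)]; field_simp]
      exact Real.sqrt_sq (by positivity)
    have h5 : Real.sqrt ((B^2*l^4/2) * (1/(2*v^2))) = |B| * l^2/(2*v) := by
      rw [show (B^2*l^4/2) * (1/(2*v^2)) = (|B| * l^2/(2*v))^2 by
        rw [div_pow, mul_pow, sq_abs]; field_simp]
      exact Real.sqrt_sq (by positivity)
    rw [h4, h5]
    have h6 : (-2 * (|B| * l^2/(2*v)) : ℝ) = -((|B| * l^2)/v) := by
      field_simp
    have h7 : Real.exp (-((|B| * l^2)/v + v/4))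
        = Real.exp (-((|B| * l^2)/v)) * Real.exp (-(v/4)) := by
      rw [← Real.exp_add]; ring_nf
    rw [h6, h7]
    have hxv : v = Real.sqrt v ^ 2 := (Real.sq_sqrt hv0.le).symm
    have hsv : (0:ℝ) < Real.sqrt v := Real.sqrt_pos.mpr hv0
    field_simp
    linear_combination (2*C*l^2*Real.sqrt 2*Real.sqrt π
      * Real.exp (-(|B| * l ^ 2) / v) * Real.exp (-v/4) * v) * Real.sq_sqrt hv0.le
      + ((Real.Gamma (3/2))⁻¹ * (1/8) - (Real.Gamma (3/2))⁻¹ * l^2 * Real.sqrt 2 * Real.sqrt π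
      * Real.exp (-(|B| * l ^ 2) / v) * Real.exp (-v/4) * v * (1/4)) * Real.sq_sqrt hv0.le
  rw [setIntegral_congr_fun measurableSet_Ioi hinner, integral_const_mul]
  have hconv : ∀ v:ℝ, Real.exp (-(|B| * l^2/v + v/4)) / Real.sqrt v
      = Real.exp (-((|B| * l^2)/v + (1/4)*v)) / Real.sqrt v := by
    intro v; ring_nf
  simp_rw [hconv]
  rw [key_laplace (show (0:ℝ) ≤ |B| * l^2 by positivity) (by norm_num : (0:ℝ) < 1/4)]
  have h8 : Real.sqrt (π/(1/4)) = 2*Real.sqrt π := by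
    rw [show π/(1/4:ℝ) = (2*Real.sqrt π)^2 by
      rw [mul_pow, Real.sq_sqrt Real.pi_pos.le]; ring]
    exact Real.sqrt_sq (by positivity)
  have h9 : Real.sqrt ((|B| * l^2)*(1/4)) = l * Real.sqrt |B| / 2 := by
    rw [show (|B| * l^2)*(1/4:ℝ) = (l * Real.sqrt |B| / 2)^2 by
      rw [div_pow, mul_pow, Real.sq_sqrt (abs_nonneg B)]; ring]
    exact Real.sqrt_sq (by positivity)
  rw [h8, h9, hC_def, const_eval]
  have h10 : (-2 * (l * Real.sqrt |B| / 2) : ℝ) = -l * Real.sqrt |B| := by ring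
  rw [h10]
  have hsp : Real.sqrt π ≠ 0 := ne_of_gt (Real.sqrt_pos.mpr Real.pi_pos)
  field_simp
end
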